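/- (Analogue of Stodola's necessary condition.) Let p(z) = a_0 z^n + a_1 z^{n−1} + ⋯ + a_n be a real polynomial of degree n ≥ 1 with a_0 > 0. If p is self-interlacing of kind I, then (−1)^{j(j+1)/2} a_j > 0 for every j = 0, 1, …, n. -/

import Mathlib

open Polynomial

namespace StodolaAux

noncomputable def E : ℕ → List ℝ → ℝ
  | 0, _ => 1
  | _+1, [] => 0
  | j+1, a :: l => E (j+1) l + a * E j l

@[simp] lemma E_zero (l : List ℝ) : E 0 l = 1 := by cases l <;> rfl
@[simp] lemma E_succ_nil (j : ℕ) : E (j+1) [] = 0 := rfl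
@[simp] lemma E_succ_cons (j : ℕ) (a : ℝ) (l : List ℝ) :
    E (j+1) (a :: l) = E (j+1) l + a * E j l := rfl

lemma E_zero_of_lt : ∀ (l : List ℝ) (j : ℕ), l.length < j → E j l = 0 := by
  intro l
  induction l with
  | nil => intro j hj; cases j with
    | zero => omega
    | succ k => rfl
  | cons a t ih =>
    intro j hj
    cases j with
    | zero => simp at hj
    | succ k =>
      simp only [E_succ_cons]
      rw [ih (k+1) (by simp at hj ⊢; omega), ih k (by simp at hj ⊢; omega)]
      ring

lemma E_map_neg : ∀ (l : List ℝ) (j : ℕ), E j (l.map (fun x => -x)) = (-1)^j * E j l := by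
  intro l
  induction l with
  | nil => intro j; cases j <;> simp
  | cons a t ih =>
    intro j
    cases j with
    | zero => simp
    | succ k =>
      simp only [List.map_cons, E_succ_cons, ih]
      rw [pow_succ]
      ring

lemma E_eq_neg (l : List ℝ) (j : ℕ) :
    E j l = (-1)^j * E j (l.map (fun x => -x)) := by
  rw [E_map_neg, ← mul_assoc, ← pow_add, ← two_mul, pow_mul]
  norm_num

/-- "Good" sign/interlacing pattern: `(-1)^i l[i] > 0` and strictly decreasing. -/
def Good (l : List ℝ) : Prop :=
  (∀ i, (h : i < l.length) → 0 < (-1:ℝ)^i * l[i]) ∧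
  (∀ i j, (hij : i < j) → (hj : j < l.length) →
    (-1:ℝ)^j * l[j] < (-1:ℝ)^i * l[i]'(hij.trans hj))

lemma good_head {a : ℝ} {t : List ℝ} (h : Good (a :: t)) : 0 < a := by
  have := h.1 0 (by simp)
  simpa using this

lemma good_pair {a b : ℝ} {t : List ℝ} (h : Good (a :: b :: t)) : -b < a := by
  have := h.2 0 1 (by norm_num) (by simp)
  simpa using this

lemma good_tail {a : ℝ} {t : List ℝ} (h : Good (a :: t)) :
    Good (t.map (fun x => -x)) := by
  constructor
  · intro i hi
    have hi' : i + 1 < (a :: t).length := by simp at hi ⊢; omega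
    have := h.1 (i+1) hi'
    rw [List.getElem_cons_succ] at this
    rw [List.getElem_map]
    rw [pow_succ] at this
    nlinarith [this]
  · intro i j hij hj
    have hj' : j + 1 < (a :: t).length := by simp at hj ⊢; omega
    have := h.2 (i+1) (j+1) (by omega) hj'
    rw [List.getElem_cons_succ, List.getElem_cons_succ] at this
    rw [List.getElem_map, List.getElem_map]
    rw [pow_succ, pow_succ] at this
    nlinarith [this]

def tri : ℕ → ℕ
  | 0 => 0
  | j+1 => tri j + j

@[simp] lemma tri_zero : tri 0 = 0 := rfl
@[simp] lemma tri_succ (j : ℕ) : tri (j+1) = tri j + j := rfl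

lemma two_mul_tri : ∀ j : ℕ, 2 * tri j = j * (j - 1)
  | 0 => rfl
  | (k+1) => by
      have ih : 2 * tri k = k * (k-1) := two_mul_tri k
      show 2 * (tri k + k) = (k+1) * (k+1-1)
      cases k with
      | zero => rfl
      | succ m =>
        have ih' : 2 * tri (m+1) = (m+1) * m := by simpa using ih
        simp only [Nat.add_sub_cancel]
        calc 2 * (tri (m+1) + (m+1)) = 2 * tri (m+1) + 2*(m+1) := by ring
          _ = (m+1) * m + 2*(m+1) := by rw [ih']
          _ = (m+1+1) * (m+1) := by ring

lemma closed_tri (j : ℕ) : j * (j + 1) / 2 = tri j + j := by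
  have h : j * (j + 1) = 2 * (tri j + j) := by
    cases j with
    | zero => rfl
    | succ k =>
      have ih' : 2 * tri (k+1) = (k+1) * k := by simpa using two_mul_tri (k+1)
      calc (k+1) * (k+1+1) = (k+1)*k + 2*(k+1) := by ring
        _ = 2 * tri (k+1) + 2*(k+1) := by rw [ih']
        _ = 2 * (tri (k+1) + (k+1)) := by ring
  rw [h, Nat.mul_div_cancel_left _ (by norm_num)]

lemma monic_Q (l : List ℝ) : ((l.map (fun a => X - C a)).prod).Monic := by
  induction l with
  | nil => simpa using monic_one
  | cons a t ih => simpa using (monic_X_sub_C a).mul ih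

lemma natDegree_Q (l : List ℝ) : ((l.map (fun a => X - C a)).prod).natDegree = l.length := by
  induction l with
  | nil => simp
  | cons a t ih =>
    simp only [List.map_cons, List.prod_cons, List.length_cons]
    rw [(monic_X_sub_C a).natDegree_mul (monic_Q t), natDegree_X_sub_C, ih]
    omega

lemma coeff_Q (l : List ℝ) : ∀ j, j ≤ l.length →
    ((l.map (fun a => X - C a)).prod).coeff (l.length - j) = (-1)^j * E j l := by
  induction l with
  | nil =>
    intro j hj
    have : j = 0 := by simpa using hj
    subst this
    simp
  | cons a t ih =>
    intro j hj
    have hj' : j ≤ t.length + 1 := by simpa using hj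
    simp only [List.map_cons, List.prod_cons, List.length_cons]
    cases j with
    | zero =>
      have h1 : t.length + 1 - 0 = ((X - C a) * (t.map (fun a => X - C a)).prod).natDegree := by
        rw [(monic_X_sub_C a).natDegree_mul (monic_Q t), natDegree_X_sub_C, natDegree_Q]
        omega
      rw [h1, Monic.coeff_natDegree ((monic_X_sub_C a).mul (monic_Q t))]
      simp
    | succ k =>
      have expand : (X - C a) * (t.map (fun a => X - C a)).prod
          = X * (t.map (fun a => X - C a)).prod - C a * (t.map (fun a => X - C a)).prod := by
        ring
      rw [expand, coeff_sub, coeff_C_mul]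
      by_cases hk : k + 1 ≤ t.length
      · have hm : t.length + 1 - (k+1) = (t.length - (k+1)) + 1 := by omega
        have hm2 : t.length + 1 - (k+1) = t.length - k := by omega
        rw [hm, coeff_X_mul, ih (k+1) hk, hm.symm.trans hm2, ih k (by omega)]
        show ((-1:ℝ))^(k+1) * E (k+1) t - a * ((-1)^k * E k t)
            = (-1)^(k+1) * (E (k+1) t + a * E k t)
        rw [pow_succ]
        ring
      · have hkl : k = t.length := by omega
        have hm : t.length + 1 - (k+1) = 0 := by omega
        rw [hm]
        have hX : (X * (t.map (fun a => X - C a)).prod).coeff 0 = 0 := by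
          rw [mul_coeff_zero, coeff_X_zero, zero_mul]
        have h0 : (0:ℕ) = t.length - k := by omega
        rw [hX, h0, ih k (by omega)]
        have hE : E (k+1) t = 0 := E_zero_of_lt t (k+1) (by omega)
        show (0:ℝ) - a * ((-1)^k * E k t) = (-1)^(k+1) * (E (k+1) t + a * E k t)
        rw [hE, pow_succ]
        ring

lemma F_cons (a : ℝ) (t : List ℝ) (k : ℕ) :
    (-1:ℝ)^(tri (k+1)) * E (k+1) (a :: t)
      = a * ((-1:ℝ)^(tri k) * E k (t.map (fun x => -x)))
        - (-1:ℝ)^k * ((-1:ℝ)^(tri (k+1)) * E (k+1) (t.map (fun x => -x))) := by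
  have hy : (-1:ℝ)^k * (-1)^k = 1 := by
    rw [← pow_add, ← two_mul, pow_mul]; norm_num
  rw [E_succ_cons, E_eq_neg t (k+1), E_eq_neg t k, tri_succ, pow_add, pow_succ]
  linear_combination (a * (-1:ℝ)^(tri k) * E k (t.map (fun x => -x))) * hy

lemma main : ∀ (m : ℕ) (l : List ℝ), l.length ≤ m → Good l →
    (∀ j, j ≤ l.length → 0 < (-1:ℝ)^(tri j) * E j l) ∧
    (∀ a t, l = a :: t → ∀ k, (-1:ℝ)^(tri (2*k+1)) * E (2*k+1) l
        ≤ a * ((-1:ℝ)^(tri (2*k)) * E (2*k) l)) := by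
  intro m
  induction m with
  | zero =>
    intro l hlen hg
    have : l = [] := List.eq_nil_of_length_eq_zero (by omega)
    subst this
    refine ⟨?_, ?_⟩
    · intro j hj
      have : j = 0 := by simpa using hj
      subst this; simp
    · intro a t heq; simp at heq
  | succ m ih =>
    intro l hlen hg
    match l with
    | [] =>
      refine ⟨?_, ?_⟩
      · intro j hj
        have : j = 0 := by simpa using hj
        subst this; simp
      · intro a t heq; simp at heq
    | a :: t =>
      have hlen' : t.length ≤ m := by simp at hlen; omega
      have ha : 0 < a := good_head hg
      have hνlen : (t.map (fun x => -x)).length = t.length := by simp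
      obtain ⟨posν, ineqν⟩ := ih (t.map (fun x => -x)) (by omega) (good_tail hg)
      have Gnonneg : ∀ j, 0 ≤ (-1:ℝ)^(tri j) * E j (t.map (fun x => -x)) := by
        intro j
        by_cases hj : j ≤ (t.map (fun x => -x)).length
        · exact (posν j hj).le
        · rw [E_zero_of_lt _ j (by omega)]; simp
      have ineq : ∀ k, (-1:ℝ)^(tri (2*k+1)) * E (2*k+1) (a :: t)
          ≤ a * ((-1:ℝ)^(tri (2*k)) * E (2*k) (a :: t)) := by
        intro k
        cases k with
        | zero =>
          have h1 := F_cons a t 0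
          have g1 := Gnonneg 1
          norm_num at h1 g1 ⊢
          linarith
        | succ k' =>
          have e1 : 2*(k'+1) = (2*k'+1)+1 := by ring
          have e2 : 2*(k'+1)+1 = (2*k'+2)+1 := by ring
          rw [e2, e1, F_cons a t (2*k'+2), F_cons a t (2*k'+1)]
          have hodd : ((-1:ℝ))^(2*k'+1) = -1 := (Nat.odd_iff.mpr (by omega)).neg_one_pow
          have heven : ((-1:ℝ))^(2*k'+2) = 1 := (Nat.even_iff.mpr (by omega)).neg_one_pow
          rw [hodd, heven]
          have g1 := Gnonneg (2*k'+1)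
          have g3 := Gnonneg (2*k'+2+1)
          nlinarith [mul_nonneg (mul_nonneg ha.le ha.le) g1]
      refine ⟨?_, ?_⟩
      · intro j hj
        cases j with
        | zero => simp
        | succ k =>
          have hk : k ≤ t.length := by simp at hj; omega
          have hGk : 0 < (-1:ℝ)^(tri k) * E k (t.map (fun x => -x)) := posν k (by omega)
          rw [F_cons a t k]
          rcases Nat.even_or_odd k with he | ho
          · rw [he.neg_one_pow]
            by_cases hkt : k = t.length
            · have hE : E (k+1) (t.map (fun x => -x)) = 0 := E_zero_of_lt _ (k+1) (by omega)
              rw [hE]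
              nlinarith
            · have hk1 : k + 1 ≤ t.length := by omega
              obtain ⟨b, t', rfl⟩ : ∃ b t'', t = b :: t'' := by
                cases t with
                | nil => simp at hk1
                | cons b t'' => exact ⟨b, t'', rfl⟩
              obtain ⟨k'', hk''⟩ := he
              have hba : -b < a := good_pair hg
              have hbnd := ineqν (-b) (t'.map (fun x => -x)) (by simp) k''
              have ekk : 2 * k'' = k := by omega
              rw [ekk] at hbnd
              have hpos : 0 < (a + b) * ((-1:ℝ)^(tri k) * E k ((b :: t').map (fun x => -x))) :=
                mul_pos (by linarith) hGk
              nlinarith [hbnd, hpos]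
          · rw [ho.neg_one_pow]
            have := Gnonneg (k+1)
            nlinarith
      · intro a' t' heq k
        rw [List.cons.injEq] at heq
        obtain ⟨rfl, rfl⟩ := heq
        exact ineq k

end StodolaAux

/-- A real polynomial `p` is *self-interlacing of kind I* if all of its `natDegree` roots
are real and simple and, listed in order of decreasing absolute value `λ₀, λ₁, …`,
they satisfy `λ₀ > -λ₁ > λ₂ > -λ₃ > ⋯ > 0`. -/
def SelfInterlacingI (p : Polynomial ℝ) : Prop :=
  ∃ lam : Fin p.natDegree → ℝ,
    (p = Polynomial.C p.leadingCoeff *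
        ∏ i : Fin p.natDegree, (Polynomial.X - Polynomial.C (lam i))) ∧
    StrictAnti (fun i : Fin p.natDegree => (-1 : ℝ) ^ (i : ℕ) * lam i) ∧
    ∀ i : Fin p.natDegree, 0 < (-1 : ℝ) ^ (i : ℕ) * lam i
/-- Analogue of Stodola's necessary condition: if `p(z) = a_0 z^n + ⋯ + a_n` of degree
`n ≥ 1` with `a_0 > 0` is self-interlacing of kind I, then `(-1)^{j(j+1)/2} a_j > 0`
for every `j = 0, 1, …, n`. -/
theorem selfInterlacing_stodola
    (n : ℕ) (hn : 1 ≤ n) (p : Polynomial ℝ)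
    (hdeg : p.natDegree = n) (hlead : 0 < p.leadingCoeff)
    (hsi : SelfInterlacingI p) :
    ∀ j, j ≤ n → 0 < (-1 : ℝ) ^ (j * (j + 1) / 2) * p.coeff (n - j) := by
  subst hdeg
  obtain ⟨lam, hp, hanti, hpos⟩ := hsi
  have hlen : (List.ofFn lam).length = p.natDegree := List.length_ofFn
  have hGood : StodolaAux.Good (List.ofFn lam) := by
    constructor
    · intro i h
      rw [List.getElem_ofFn]
      simpa using hpos ⟨i, by omega⟩
    · intro i j hij hj
      rw [List.getElem_ofFn, List.getElem_ofFn]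
      simpa using hanti
        (show (⟨i, by omega⟩ : Fin p.natDegree) < ⟨j, by omega⟩ from hij)
  have hprod : (∏ i : Fin p.natDegree, (X - Polynomial.C (lam i)))
      = ((List.ofFn lam).map (fun a => X - Polynomial.C a)).prod := by
    rw [show (List.ofFn lam).map (fun a => X - Polynomial.C a)
        = List.ofFn (fun i => X - Polynomial.C (lam i)) by
      rw [List.map_ofFn]; rfl]
    rw [List.prod_ofFn]
  have hQ : p = Polynomial.C p.leadingCoeff
      * ((List.ofFn lam).map (fun a => X - Polynomial.C a)).prod := by
    rw [← hprod]; exact hp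
  intro j hj
  have hjl : j ≤ (List.ofFn lam).length := by omega
  have hcoeff : p.coeff (p.natDegree - j)
      = p.leadingCoeff * ((-1)^j * StodolaAux.E j (List.ofFn lam)) := by
    have h2 : p.coeff ((List.ofFn lam).length - j)
        = (Polynomial.C p.leadingCoeff
            * ((List.ofFn lam).map (fun a => X - Polynomial.C a)).prod).coeff
          ((List.ofFn lam).length - j) :=
      congrArg (fun q : Polynomial ℝ => q.coeff ((List.ofFn lam).length - j)) hQ
    rw [show p.natDegree - j = (List.ofFn lam).length - j from by omega, h2,
      Polynomial.coeff_C_mul, StodolaAux.coeff_Q (List.ofFn lam) j hjl]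
  rw [hcoeff, StodolaAux.closed_tri j, pow_add]
  have hy : (-1:ℝ)^j * (-1)^j = 1 := by
    rw [← pow_add, ← two_mul, pow_mul]; norm_num
  have hmain := (StodolaAux.main (List.ofFn lam).length (List.ofFn lam) le_rfl hGood).1 j hjl
  have key : (-1:ℝ)^(StodolaAux.tri j) * (-1)^j
        * (p.leadingCoeff * ((-1)^j * StodolaAux.E j (List.ofFn lam)))
      = p.leadingCoeff * ((-1)^(StodolaAux.tri j) * StodolaAux.E j (List.ofFn lam)) := by
    linear_combination (p.leadingCoeff * (-1:ℝ)^(StodolaAux.tri j)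
      * StodolaAux.E j (List.ofFn lam)) * hy
  rw [key]
  exact mul_pos hlead hmain
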